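/- Let L ⊆ ℝ^n be a full-rank lattice all of whose nonzero shells L(r²) = {x ∈ L : ‖x‖² = r²} form spherical 2-designs. Then for every α > 0 and every symmetric traceless n×n matrix H, the directional derivative of the Gaussian energy at L vanishes: ∑_{x ∈ L \ {0}} (xᵀHx) e^{−α‖x‖²} = 0. -/

import Mathlib

open MvPolynomial

/-- The Laplacian of a multivariate polynomial. -/
noncomputable def mvLaplacian {n : ℕ} (p : MvPolynomial (Fin n) ℝ) : MvPolynomial (Fin n) ℝ :=
  ∑ i, pderiv i (pderiv i p)

/-- `X` is a spherical `t`-design on the sphere of radius `r` in `ℝ^n`: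
all points lie on the sphere, and every homogeneous harmonic polynomial of degree
`1, …, t` sums to zero over `X`. -/
def IsSphericalDesign (n t : ℕ) (r : ℝ) (X : Finset (EuclideanSpace ℝ (Fin n))) : Prop :=
  (∀ x ∈ X, ‖x‖ = r) ∧
  ∀ d : ℕ, 1 ≤ d → d ≤ t → ∀ p : MvPolynomial (Fin n) ℝ,
    p.IsHomogeneous d → mvLaplacian p = 0 →
    ∑ x ∈ X, MvPolynomial.eval (fun i => x i) p = 0


open Matrix

noncomputable def quadPoly {n : ℕ} (H : Matrix (Fin n) (Fin n) ℝ) : MvPolynomial (Fin n) ℝ :=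
  ∑ i, ∑ j, C (H i j) * (X i * X j)

lemma quadPoly_lap {n : ℕ} (H : Matrix (Fin n) (Fin n) ℝ) (htr : Matrix.trace H = 0) :
    mvLaplacian (quadPoly H) = 0 := by
  classical
  unfold mvLaplacian quadPoly
  simp only [map_sum, Derivation.leibniz, pderiv_X, pderiv_C, smul_eq_mul, map_add, _root_.map_mul,
    mul_zero, zero_mul, add_zero, zero_add, mul_one, one_mul, _root_.map_one, _root_.map_zero, apply_ite]
  simp only [Pi.single_apply, apply_ite (MvPolynomial.pderiv _), _root_.map_one, _root_.map_zero, mul_ite, ite_mul, one_mul, mul_one, zero_mul, mul_zero, add_zero, zero_add]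

  simp only [Derivation.map_one_eq_zero, mul_zero, zero_add, add_zero, ite_add_ite]
  simp only [ite_self, zero_add, mul_add, mul_ite, mul_one, mul_zero]
  simp only [Finset.sum_add_distrib, Finset.sum_ite_eq, Finset.sum_ite_eq', Finset.mem_univ,
    if_true, Finset.sum_ite_irrel, Finset.sum_const_zero]
  have h0 : ∑ x, H x x = 0 := htr
  rw [← _root_.map_sum, h0, map_zero, add_zero]

lemma quadPoly_homog {n : ℕ} (H : Matrix (Fin n) (Fin n) ℝ) :
    (quadPoly H).IsHomogeneous 2 := by
  apply IsHomogeneous.sum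
  intro i _
  apply IsHomogeneous.sum
  intro j _
  have h2 : (2 : ℕ) = 0 + (1 + 1) := rfl
  rw [h2]
  exact (isHomogeneous_C _ _).mul ((isHomogeneous_X _ _).mul (isHomogeneous_X _ _))

lemma quadPoly_eval {n : ℕ} (H : Matrix (Fin n) (Fin n) ℝ) (v : Fin n → ℝ) :
    MvPolynomial.eval v (quadPoly H) = v ⬝ᵥ (H *ᵥ v) := by
  simp only [quadPoly, dotProduct, Matrix.mulVec, map_sum, _root_.map_mul, eval_C, eval_X,
    Finset.mul_sum]
  exact Finset.sum_congr rfl fun i _ => Finset.sum_congr rfl fun j _ => by ring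

open Matrix in
theorem gradient_vanishes_of_shells_two_designs {n : ℕ} (hn : 0 < n)
    (L : Submodule ℤ (EuclideanSpace ℝ (Fin n))) (hdisc : DiscreteTopology L)
    (hspan : Submodule.span ℝ (L : Set (EuclideanSpace ℝ (Fin n))) = ⊤)
    (hfin : ∀ r : ℝ, {x : EuclideanSpace ℝ (Fin n) | x ∈ L ∧ ‖x‖ = r}.Finite)
    (hdesign : ∀ r : ℝ, 0 < r → IsSphericalDesign n 2 r (hfin r).toFinset)
    (α : ℝ) (hα : 0 < α) (H : Matrix (Fin n) (Fin n) ℝ) (hH : Hᵀ = H)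
    (htr : Matrix.trace H = 0)
    (hsum : Summable fun x : {x : EuclideanSpace ℝ (Fin n) // x ∈ L ∧ x ≠ 0} =>
      |(fun i => (x : EuclideanSpace ℝ (Fin n)) i) ⬝ᵥ
          (H *ᵥ fun i => (x : EuclideanSpace ℝ (Fin n)) i)| *
        Real.exp (-α * ‖(x : EuclideanSpace ℝ (Fin n))‖ ^ 2)) :
    ∑' x : {x : EuclideanSpace ℝ (Fin n) // x ∈ L ∧ x ≠ 0},
      ((fun i => (x : EuclideanSpace ℝ (Fin n)) i) ⬝ᵥ
          (H *ᵥ fun i => (x : EuclideanSpace ℝ (Fin n)) i)) *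
        Real.exp (-α * ‖(x : EuclideanSpace ℝ (Fin n))‖ ^ 2) = 0 := by
  classical
  set T := {x : EuclideanSpace ℝ (Fin n) // x ∈ L ∧ x ≠ 0} with hT
  set f : T → ℝ := fun x =>
    ((fun i => (x : EuclideanSpace ℝ (Fin n)) i) ⬝ᵥ
        (H *ᵥ fun i => (x : EuclideanSpace ℝ (Fin n)) i)) *
      Real.exp (-α * ‖(x : EuclideanSpace ℝ (Fin n))‖ ^ 2) with hfdef
  have hsum' : Summable f := by
    rw [← summable_abs_iff]
    convert hsum using 2 with x
    · rfl
    rw [hfdef, abs_mul, abs_of_pos (Real.exp_pos _)]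
  have key : ∀ r : ℝ,
      ∑' x : (fun x : T => ‖(x : EuclideanSpace ℝ (Fin n))‖) ⁻¹' {r}, f x = 0 := by
    intro r
    rcases le_or_gt r 0 with hr | hr
    · have : IsEmpty ((fun x : T => ‖(x : EuclideanSpace ℝ (Fin n))‖) ⁻¹' {r}) := by
        constructor
        rintro ⟨x, hx⟩
        have h1 : (0:ℝ) < ‖(x : EuclideanSpace ℝ (Fin n))‖ := norm_pos_iff.2 x.2.2
        have h2 : ‖(x : EuclideanSpace ℝ (Fin n))‖ = r := hx
        linarith
      exact tsum_empty
    · set S := (hfin r).toFinset with hS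
      have hmem : ∀ y, y ∈ S ↔ y ∈ L ∧ ‖y‖ = r := by
        intro y; simp [hS, Set.Finite.mem_toFinset]
      set e : {y : EuclideanSpace ℝ (Fin n) // y ∈ S} ≃
          ((fun x : T => ‖(x : EuclideanSpace ℝ (Fin n))‖) ⁻¹' {r}) :=
        { toFun := fun y => ⟨⟨y, ((hmem y).1 y.2).1, by
            intro h0
            have := ((hmem y).1 y.2).2
            rw [h0, norm_zero] at this
            exact absurd this.symm (ne_of_gt hr)⟩, ((hmem y).1 y.2).2⟩
          invFun := fun x => ⟨(x : T), (hmem _).2 ⟨(x : T).2.1, x.2⟩⟩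
          left_inv := fun y => rfl
          right_inv := fun x => rfl } with he
      rw [← Equiv.tsum_eq e (fun x => f x)]
      have heq : ∀ y : {y : EuclideanSpace ℝ (Fin n) // y ∈ S},
          f (e y) = ((fun i => (y : EuclideanSpace ℝ (Fin n)) i) ⬝ᵥ
            (H *ᵥ fun i => (y : EuclideanSpace ℝ (Fin n)) i)) * Real.exp (-α * r ^ 2) := by
        intro y
        rw [hfdef]
        simp only [he, Equiv.coe_fn_mk]
        rw [((hmem y).1 y.2).2]
      rw [tsum_congr heq, Finset.tsum_subtype S (fun y => ((fun i => y i) ⬝ᵥ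
            (H *ᵥ fun i => y i)) * Real.exp (-α * r ^ 2)), ← Finset.sum_mul]
      have hdes := (hdesign r hr).2 2 one_le_two le_rfl (quadPoly H) (quadPoly_homog H)
        (quadPoly_lap H htr)
      have : ∑ x ∈ S, (fun i => x i) ⬝ᵥ (H *ᵥ fun i => x i) = 0 := by
        rw [← hdes]
        exact Finset.sum_congr rfl fun x _ => (quadPoly_eval H (fun i => x i)).symm
      rw [this, zero_mul]
  have hfib := hsum'.hasSum.tsum_fiberwise (fun x : T => ‖(x : EuclideanSpace ℝ (Fin n))‖)
  rw [funext key] at hfib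
  exact hfib.unique hasSum_zero
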